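/- Let W be a string over {A, X, B} such that the cyclic sentence (W) contains the substring XB (read cyclically). Then |(W)| = 0. -/

import Mathlib

/-!
The "tight puzzle" of Schwartz–Tabachnikov.  Strings over the alphabet `{A, X, B}`;
word list (coefficient, weight): `X (1,0)`, `XA (1,1)`, `XAA (1,1)`, `AXA (2,1)`,
`AAA (-1,1)`, `BA (-1,1)`, `ABA (-1,1)`, `XXA (-1,1)`; in a parsing the word `X` may
never be immediately followed by the word `XA` or the word `BA`.
-/

open scoped Classical

/-- The three-letter alphabet. -/
inductive PLetter | A | X | B
deriving DecidableEq

/-- Strings over the alphabet. -/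
abbrev PWord := List PLetter

/-- The tight puzzle word list. -/
def tightWords : List PWord :=
  [[PLetter.X], [PLetter.X, PLetter.A], [PLetter.X, PLetter.A, PLetter.A],
   [PLetter.A, PLetter.X, PLetter.A], [PLetter.A, PLetter.A, PLetter.A],
   [PLetter.B, PLetter.A], [PLetter.A, PLetter.B, PLetter.A],
   [PLetter.X, PLetter.X, PLetter.A]]

/-- Coefficients of the words of the tight puzzle (`AXA ↦ 2`; `AAA, BA, ABA, XXA ↦ -1`;
`X, XA, XAA ↦ 1`). -/
def tightCoeff (w : PWord) : ℤ :=
  if w = [PLetter.A, PLetter.X, PLetter.A] then 2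
  else if w = [PLetter.A, PLetter.A, PLetter.A] ∨ w = [PLetter.B, PLetter.A] ∨
      w = [PLetter.A, PLetter.B, PLetter.A] ∨ w = [PLetter.X, PLetter.X, PLetter.A] then -1
  else 1

/-- Weights of the words: the word `X` has weight `0`, all other words weight `1`. -/
def wordWt (w : PWord) : ℕ := if w = [PLetter.X] then 0 else 1

/-- The forbidden adjacency: the word `X` immediately followed by `XA` or `BA`. -/
def Bad (u v : PWord) : Prop :=
  u = [PLetter.X] ∧ (v = [PLetter.X, PLetter.A] ∨ v = [PLetter.B, PLetter.A])

/-- The contribution `coefficient · t^weight ∈ ℤ[t]` of a parsing `L`. -/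
noncomputable def parseVal (c : PWord → ℤ) (L : List PWord) : Polynomial ℤ :=
  Polynomial.C ((L.map c).prod) * Polynomial.X ^ ((L.map wordWt).sum)

/-- `L` is a parsing in the tight puzzle: all its words are on the word list and the
forbidden adjacency never occurs. -/
def TightChain (L : List PWord) : Prop :=
  (∀ w ∈ L, w ∈ tightWords) ∧ List.Chain' (fun u v => ¬ Bad u v) L

/-- The *core* of a string: what remains after deleting all leading and trailing `X`s. -/
def core (s : PWord) : PWord :=
  ((s.dropWhile (· == PLetter.X)).reverse.dropWhile (· == PLetter.X)).reverse

/-- `L` is a parsing of the bi-infinite string `⋯XX·W·XX⋯` (with the infinitely many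
padding `X`s parsed as copies of the word `X` and trimmed away): the words of `L`
concatenate to `W` up to padding by `X`s on either side, `L` neither starts nor ends
with the word `X`, and (because of the padding `X`-words on the left) the first word
of `L` is not `XA` or `BA`. -/
def IsOpenParsing (W : PWord) (L : List PWord) : Prop :=
  TightChain L ∧ core L.flatten = core W ∧
  ∀ h : L ≠ [],
    L.head h ≠ [PLetter.X] ∧ L.head h ≠ [PLetter.X, PLetter.A] ∧
    L.head h ≠ [PLetter.B, PLetter.A] ∧ L.getLast h ≠ [PLetter.X]

/-- `(r, L)` is a parsing of the cyclic string `(W)`: reading the necklace of the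
letters of `W` starting at position `r`, the words of `L` concatenate to it, the
forbidden adjacency does not occur (cyclically), and `r < (last word).length`
(so that every parsing of the necklace is counted exactly once). -/
def IsCyclicParsing (W : PWord) (r : ℕ) (L : List PWord) : Prop :=
  TightChain L ∧
  ∃ h : L ≠ [], L.flatten = W.rotate r ∧ r < (L.getLast h).length ∧
    ¬ Bad (L.getLast h) (L.head h)

/-- `L` is a parsing of the locked string `[W]`: the words of `L` concatenate exactly
to `W`, no padding allowed. -/
def IsLockedParsing (W : PWord) (L : List PWord) : Prop :=
  TightChain L ∧ L.flatten = W

/-- The nine words of both puzzles, as a function (used to enumerate parsings). -/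
def wordOf : Fin 9 → PWord :=
  ![[PLetter.X], [PLetter.X, PLetter.A], [PLetter.X, PLetter.A, PLetter.A],
    [PLetter.X, PLetter.B, PLetter.A], [PLetter.A, PLetter.X, PLetter.A],
    [PLetter.A, PLetter.A, PLetter.A], [PLetter.B, PLetter.A],
    [PLetter.A, PLetter.B, PLetter.A], [PLetter.X, PLetter.X, PLetter.A]]

/-- The open value `|W| ∈ ℤ[t]`: the sum of `coefficient · t^weight` over all parsings
of the bi-infinite string `⋯XX·W·XX⋯` (any such parsing consists of at most
`W.length + 2` words). -/
noncomputable def openVal (W : PWord) : Polynomial ℤ :=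
  ∑ k ∈ Finset.range (W.length + 3), ∑ f : Fin k → Fin 9,
    if IsOpenParsing W ((List.ofFn f).map wordOf) then
      parseVal tightCoeff ((List.ofFn f).map wordOf)
    else 0

/-- The cyclic value `|(W)| ∈ ℤ[t]`: the sum of `coefficient · t^weight` over all
parsings of the cyclic string `(W)`. -/
noncomputable def cycVal (W : PWord) : Polynomial ℤ :=
  ∑ r ∈ Finset.range W.length, ∑ k ∈ Finset.range (W.length + 1), ∑ f : Fin k → Fin 9,
    if IsCyclicParsing W r ((List.ofFn f).map wordOf) then
      parseVal tightCoeff ((List.ofFn f).map wordOf)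
    else 0

/-- The locked value `|[W]| ∈ ℤ[t]`: the sum of `coefficient · t^weight` over all
parsings whose concatenation is exactly `W`. -/
noncomputable def lockVal (W : PWord) : Polynomial ℤ :=
  ∑ k ∈ Finset.range (W.length + 1), ∑ f : Fin k → Fin 9,
    if IsLockedParsing W ((List.ofFn f).map wordOf) then
      parseVal tightCoeff ((List.ofFn f).map wordOf)
    else 0

/-- The original puzzle word list (the tight list together with `XBA`). -/
def origWords : List PWord :=
  tightWords ++ [[PLetter.X, PLetter.B, PLetter.A]]

/-- Coefficients of the words of the original puzzle (`AXA ↦ 2`; `XXA ↦ -2`;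
`AAA, BA, ABA ↦ -1`; `X, XA, XAA, XBA ↦ 1`). -/
def origCoeff (w : PWord) : ℤ :=
  if w = [PLetter.A, PLetter.X, PLetter.A] then 2
  else if w = [PLetter.X, PLetter.X, PLetter.A] then -2
  else if w = [PLetter.A, PLetter.A, PLetter.A] ∨ w = [PLetter.B, PLetter.A] ∨
      w = [PLetter.A, PLetter.B, PLetter.A] then -1
  else 1

/-- `(r, L)` is a parsing of the cyclic string `(W)` in the original puzzle (all
parsings allowed, no adjacency restriction): reading the necklace of the letters of
`W` starting at position `r`, the words of `L` concatenate to it, and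
`r < (last word).length` (so that every parsing of the necklace is counted exactly
once). -/
def IsOrigCyclicParsing (W : PWord) (r : ℕ) (L : List PWord) : Prop :=
  (∀ w ∈ L, w ∈ origWords) ∧
  ∃ h : L ≠ [], L.flatten = W.rotate r ∧ r < (L.getLast h).length

/-- The cyclic value `|(W)| ∈ ℤ[t]` in the original puzzle. -/
noncomputable def origCycVal (W : PWord) : Polynomial ℤ :=
  ∑ r ∈ Finset.range W.length, ∑ k ∈ Finset.range (W.length + 1), ∑ f : Fin k → Fin 9,
    if IsOrigCyclicParsing W r ((List.ofFn f).map wordOf) then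
      parseVal origCoeff ((List.ofFn f).map wordOf)
    else 0
namespace TightAux

def flat (l : List (Fin 9)) : PWord := (l.map wordOf).flatten

@[simp] lemma flat_nil : flat [] = [] := rfl
@[simp] lemma flat_cons (a : Fin 9) (l) : flat (a :: l) = wordOf a ++ flat l := by
  simp [flat]
@[simp] lemma flat_append (p q) : flat (p ++ q) = flat p ++ flat q := by simp [flat]

lemma wlen_pos (a : Fin 9) : 0 < (wordOf a).length := by
  revert a; decide

lemma wordOf_mem (a : Fin 9) : wordOf a ∈ origWords := by
  revert a; decide

lemma length_le_flat (l : List (Fin 9)) : l.length ≤ (flat l).length := by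
  induction l with
  | nil => simp
  | cons a l ih => have := wlen_pos a; simp only [flat_cons, List.length_cons,
      List.length_append]; omega

def splitIdx : List (Fin 9) → ℕ → List (Fin 9) × List (Fin 9)
  | [], _ => ([], [])
  | a :: l, i =>
    if i < (wordOf a).length then ([], a :: l)
    else ((a :: (splitIdx l (i - (wordOf a).length)).1), (splitIdx l (i - (wordOf a).length)).2)

lemma splitIdx_spec (l : List (Fin 9)) (i : ℕ) (h : i < (flat l).length) :
    ∃ P a Q, splitIdx l i = (P, a :: Q) ∧ l = P ++ a :: Q ∧
      (flat P).length ≤ i ∧ i < (flat P).length + (wordOf a).length := by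
  induction l generalizing i with
  | nil => simp at h
  | cons b l ih =>
    by_cases hb : i < (wordOf b).length
    · exact ⟨[], b, l, by simp [splitIdx, hb], by simp, by simp, by simpa using hb⟩
    · have hlt : i - (wordOf b).length < (flat l).length := by
        simp only [flat_cons, List.length_append] at h; omega
      obtain ⟨P, a, Q, h1, h2, h3, h4⟩ := ih _ hlt
      refine ⟨b :: P, a, Q, ?_, by simp [h2], ?_, ?_⟩
      · simp [splitIdx, hb, h1]
      · simp only [flat_cons, List.length_append]; omega
      · simp only [flat_cons, List.length_append]; omega

lemma splitIdx_eq (P : List (Fin 9)) (a : Fin 9) (Q : List (Fin 9)) (i : ℕ)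
    (h1 : (flat P).length ≤ i) (h2 : i < (flat P).length + (wordOf a).length) :
    splitIdx (P ++ a :: Q) i = (P, a :: Q) := by
  induction P generalizing i with
  | nil => simp at h2; simp [splitIdx, h2]
  | cons b P ih =>
    simp only [flat_cons, List.length_append] at h1 h2
    have hb : ¬ i < (wordOf b).length := by omega
    have hi := ih (i - (wordOf b).length) (by omega) (by omega)
    simp only [List.cons_append, splitIdx, hb, if_false, List.append_eq, hi]

end TightAux
namespace TightAux

open PLetter

lemma wordOf_eq_cases : ∀ a : Fin 9, wordOf a = [X] ∨ wordOf a = [X, A] ∨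
    wordOf a = [X, A, A] ∨ wordOf a = [X, B, A] ∨ wordOf a = [A, X, A] ∨
    wordOf a = [A, A, A] ∨ wordOf a = [B, A] ∨ wordOf a = [A, B, A] ∨
    wordOf a = [X, X, A] := by decide

lemma eq3 : ∀ a : Fin 9, wordOf a = [X, B, A] → a = 3 := by decide
lemma eq0 : ∀ a : Fin 9, wordOf a = [X] → a = 0 := by decide
lemma eq6 : ∀ a : Fin 9, wordOf a = [B, A] → a = 6 := by decide

lemma key (a : Fin 9) (o : ℕ) (ho : o < (wordOf a).length) (rest t : PWord)
    (hXB : (wordOf a).drop o ++ rest = X :: B :: t) :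
    (a = 3 ∧ o = 0) ∨ (a = 0 ∧ o = 0 ∧ ∃ t', rest = B :: t') := by
  rcases wordOf_eq_cases a with h|h|h|h|h|h|h|h|h <;> rw [h] at ho hXB <;>
    simp only [List.length_cons, List.length_nil] at ho <;>
    interval_cases o <;> simp_all <;>
    first
      | exact Or.inl (eq3 a h)
      | exact Or.inr (eq0 a h)

lemma headB (a : Fin 9) (s : PWord) (h : wordOf a = B :: s) : a = 6 := by
  rcases wordOf_eq_cases a with h'|h'|h'|h'|h'|h'|h'|h'|h' <;> rw [h'] at h <;>
    first | exact eq6 a h' | simp at h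

lemma mod_helper (x N : ℕ) (h : x < 2 * N) :
    (x < N ∧ x % N = x) ∨ (N ≤ x ∧ x % N = x - N) := by
  rcases lt_or_ge x N with h'|h'
  · exact Or.inl ⟨h', Nat.mod_eq_of_lt h'⟩
  · exact Or.inr ⟨h', by rw [Nat.mod_eq_sub_mod h', Nat.mod_eq_of_lt (by omega)]⟩

lemma flatten_map_eq_flat (l : List (Fin 9)) : (l.map wordOf).flatten = flat l := rfl

lemma isOrig_iff (W : PWord) (r : ℕ) (l : List (Fin 9)) :
    IsOrigCyclicParsing W r (l.map wordOf) ↔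
      (flat l = W.rotate r ∧ ∃ a, l.getLast? = some a ∧ r < (wordOf a).length) := by
  constructor
  · rintro ⟨-, hne, hflat, hlast⟩
    have hl : l ≠ [] := by simpa using fun h => hne (by simp [h])
    refine ⟨hflat, l.getLast hl, List.getLast?_eq_getLast hl, ?_⟩
    rwa [List.getLast_map] at hlast
  · rintro ⟨hflat, a, hlast, hr⟩
    have hl : l ≠ [] := by rintro rfl; simp at hlast
    refine ⟨fun w hw => ?_, fun hmap => hl (by simpa using hmap), hflat, ?_⟩
    · obtain ⟨b, -, rfl⟩ := List.mem_map.1 hw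
      exact wordOf_mem b
    · rw [List.getLast_map]
      have h2 : l.getLast hl = a := by
        rw [List.getLast?_eq_getLast hl] at hlast
        exact Option.some_inj.1 hlast
      rw [h2]
      exact hr

end TightAux
namespace TightAux

open PLetter

@[simp] lemma w0 : wordOf 0 = [X] := by decide
@[simp] lemma w3 : wordOf 3 = [X, B, A] := by decide
@[simp] lemma w6 : wordOf 6 = [B, A] := by decide
@[simp] lemma co0 : origCoeff (wordOf 0) = 1 := by decide
@[simp] lemma co3 : origCoeff (wordOf 3) = 1 := by decide
@[simp] lemma co6 : origCoeff (wordOf 6) = -1 := by decide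
@[simp] lemma wt0 : wordWt (wordOf 0) = 0 := by decide
@[simp] lemma wt3 : wordWt (wordOf 3) = 1 := by decide
@[simp] lemma wt6 : wordWt (wordOf 6) = 1 := by decide

lemma parseVal_flip1 (P Q : List (Fin 9)) :
    parseVal origCoeff ((P ++ 0 :: 6 :: Q).map wordOf)
      = - parseVal origCoeff ((P ++ 3 :: Q).map wordOf) := by
  simp only [parseVal, List.map_append, List.map_cons, List.prod_append, List.prod_cons,
    List.sum_append, List.sum_cons, co0, co3, co6, wt0, wt3, wt6, map_mul, map_neg, map_one]
  ring_nf

lemma parseVal_flip2 (P : List (Fin 9)) :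
    parseVal origCoeff ((6 :: (P ++ [0])).map wordOf)
      = - parseVal origCoeff ((P ++ [3]).map wordOf) := by
  simp only [parseVal, List.map_append, List.map_cons, List.map_nil, List.prod_append,
    List.prod_cons, List.prod_nil, List.sum_append, List.sum_cons, List.sum_nil,
    co0, co3, co6, wt0, wt3, wt6, neg_one_mul, map_neg]
  ring_nf

def Tstep (P Q : List (Fin 9)) (r : ℕ) (x : ℕ × List (Fin 9)) : ℕ × List (Fin 9) :=
  if Q.take 1 = [3] then
    if Q.tail = [] ∧ r = 2 then (0, 6 :: (P ++ [0])) else (r, P ++ 0 :: 6 :: Q.tail)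
  else if Q.take 2 = [0, 6] then (r, P ++ 3 :: Q.tail.tail)
  else if Q = [0] ∧ P.take 1 = [6] then (2, P.tail ++ [3])
  else x

noncomputable def Tmap (W : PWord) (r₀ : ℕ) (x : ℕ × List (Fin 9)) : ℕ × List (Fin 9) :=
  if IsOrigCyclicParsing W x.1 (x.2.map wordOf) then
    Tstep (splitIdx x.2 ((r₀ + W.length - x.1) % W.length)).1
          (splitIdx x.2 ((r₀ + W.length - x.1) % W.length)).2 x.1 x
  else x

lemma Tstep1 (P Q' : List (Fin 9)) (r : ℕ) (x) (h : ¬ (Q' = [] ∧ r = 2)) :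
    Tstep P (3 :: Q') r x = (r, P ++ 0 :: 6 :: Q') := by
  simp [Tstep, h]

lemma Tstep2 (P : List (Fin 9)) (x) :
    Tstep P [3] 2 x = (0, 6 :: (P ++ [0])) := by
  simp [Tstep]

lemma Tstep3 (P Q'' : List (Fin 9)) (r : ℕ) (x) :
    Tstep P (0 :: 6 :: Q'') r x = (r, P ++ 3 :: Q'') := by
  have h1 : (0 : Fin 9) ≠ 3 := by decide
  simp [Tstep, h1]

lemma Tstep4 (P' : List (Fin 9)) (r : ℕ) (x) :
    Tstep (6 :: P') [0] r x = (2, P' ++ [3]) := by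
  have h1 : (0 : Fin 9) ≠ 3 := by decide
  have h2 : (0 : Fin 9) ≠ 6 := by decide
  simp [Tstep, h1, h2]

end TightAux
namespace TightAux

open PLetter

lemma head_eq_B (p : Fin 9) (s t : PWord) (h : wordOf p ++ s = B :: t) : p = 6 := by
  cases hwp : wordOf p with
  | nil => have := wlen_pos p; rw [hwp] at this; simp at this
  | cons c cs =>
    rw [hwp] at h
    injection h with h1 h2
    exact headB p cs (h1 ▸ hwp)

lemma valid_len_le (W : PWord) (r : ℕ) (l : List (Fin 9))
    (hval : IsOrigCyclicParsing W r (l.map wordOf)) : l.length ≤ W.length := by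
  obtain ⟨hflat, -⟩ := (isOrig_iff W r l).1 hval
  have h1 := length_le_flat l
  rw [hflat, List.length_rotate] at h1
  exact h1

lemma struct (W : PWord) (r₀ r : ℕ) (l : List (Fin 9))
    (hr₀ : r₀ < W.length) (hpre : [X, B] <+: W.rotate r₀) (hr : r < W.length)
    (hval : IsOrigCyclicParsing W r (l.map wordOf)) :
    ∃ P Q, splitIdx l ((r₀ + W.length - r) % W.length) = (P, Q) ∧ l = P ++ Q ∧
      (r₀ + W.length - r) % W.length = (flat P).length ∧
      ((∃ Q', Q = 3 :: Q') ∨ (∃ Q'', Q = 0 :: 6 :: Q'') ∨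
        (Q = [0] ∧ ∃ P', P = 6 :: P')) := by
  set N := W.length with hN
  have hNpos : 0 < N := by omega
  set i := (r₀ + N - r) % N with hi
  have hiN : i < N := Nat.mod_lt _ hNpos
  obtain ⟨hflat, -⟩ := (isOrig_iff W r l).1 hval
  have hlen : (flat l).length = N := by rw [hflat, List.length_rotate]
  obtain ⟨P, a, Q', hsplit, hl, h1, h2⟩ := splitIdx_spec l i (by omega)
  set o := i - (flat P).length with ho
  have hoa : o < (wordOf a).length := by omega
  have hmod : (r + i) % N = r₀ := by
    rcases mod_helper (r₀ + N - r) N (by omega) with ⟨e1, e2⟩ | ⟨e1, e2⟩ <;>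
      rcases mod_helper (r + i) N (by omega) with ⟨e3, e4⟩ | ⟨e3, e4⟩ <;>
      omega
  have hrot : (flat l).rotate i = W.rotate r₀ := by
    rw [hflat, List.rotate_rotate, ← List.rotate_mod W (r + i)]
    rw [← hN, hmod]
  obtain ⟨u, hu⟩ := hpre
  have hdrop : (wordOf a).drop o ++ (flat Q' ++ (flat P ++ (wordOf a).take o))
      = X :: B :: u := by
    have h3 : (flat l).rotate i
        = (wordOf a).drop o ++ (flat Q' ++ (flat P ++ (wordOf a).take o)) := by
      rw [List.rotate_eq_drop_append_take (by omega : i ≤ (flat l).length)]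
      rw [hl, flat_append, flat_cons]
      have hio : i = (flat P).length + o := by omega
      rw [hio, List.drop_length_add_append, List.take_length_add_append,
        List.drop_append_of_le_length (le_of_lt hoa),
        List.take_append_of_le_length (le_of_lt hoa)]
      simp [List.append_assoc]
    rw [← h3, hrot, ← hu]
    rfl
  rcases key a o hoa _ u hdrop with ⟨ha, ho0⟩ | ⟨ha, ho0, t', ht'⟩
  · subst ha
    exact ⟨P, 3 :: Q', hsplit, hl, by omega, Or.inl ⟨Q', rfl⟩⟩
  · subst ha
    rw [ho0] at ht'
    simp only [List.take_zero, List.append_nil] at ht'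
    cases Q' with
    | nil =>
      simp only [flat_nil, List.nil_append] at ht'
      cases P with
      | nil => rw [flat_nil] at ht'; simp at ht'
      | cons p P' =>
        rw [flat_cons] at ht'
        have hp6 : p = 6 := head_eq_B p _ _ ht'
        exact ⟨p :: P', [0], hsplit, hl, by omega, Or.inr (Or.inr ⟨rfl, P', by rw [hp6]⟩)⟩
    | cons q Q'' =>
      rw [flat_cons, List.append_assoc] at ht'
      have hq6 : q = 6 := head_eq_B q _ _ ht'
      exact ⟨P, 0 :: q :: Q'', hsplit, hl, by omega, Or.inr (Or.inl ⟨Q'', by rw [hq6]⟩)⟩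

end TightAux
namespace TightAux

open PLetter

lemma master (W : PWord) (r₀ : ℕ) (hr₀ : r₀ < W.length)
    (hpre : [X, B] <+: W.rotate r₀) (r : ℕ) (l : List (Fin 9)) (hr : r < W.length)
    (hval : IsOrigCyclicParsing W r (l.map wordOf)) :
    IsOrigCyclicParsing W (Tmap W r₀ (r, l)).1 ((Tmap W r₀ (r, l)).2.map wordOf) ∧
    (Tmap W r₀ (r, l)).1 < W.length ∧
    Tmap W r₀ (Tmap W r₀ (r, l)) = (r, l) ∧
    (Tmap W r₀ (r, l)).2.length ≠ l.length ∧
    parseVal origCoeff ((Tmap W r₀ (r, l)).2.map wordOf)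
      = - parseVal origCoeff (l.map wordOf) := by
  set N := W.length with hN
  have hNpos : 0 < N := by omega
  set i := (r₀ + N - r) % N with hi
  have hiN : i < N := Nat.mod_lt _ hNpos
  obtain ⟨P, Q, hsplit, hlQ, hiP, hcase⟩ := struct W r₀ r l hr₀ hpre hr hval
  rw [← hN, ← hi] at hsplit hiP
  obtain ⟨hflat, a₀, hlast, halen⟩ := (isOrig_iff W r l).1 hval
  have hlen : (flat l).length = N := by rw [hflat, List.length_rotate]
  have hTx : Tmap W r₀ (r, l) = Tstep P Q r (r, l) := by
    rw [Tmap, if_pos hval, ← hN, ← hi, hsplit]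
  rcases hcase with ⟨Q', rfl⟩ | ⟨Q'', rfl⟩ | ⟨hQ0, P', rfl⟩
  · -- the word covering the marked X is XBA
    by_cases hc : Q' = [] ∧ r = 2
    · -- XBA is the last word and the cut falls before its B: wrap around
      obtain ⟨rfl, rfl⟩ := hc
      rw [Tstep2] at hTx
      have hW2 : W.rotate 2 = flat P ++ [X, B, A] := by
        rw [← hflat, hlQ]; simp
      have hNP : N = (flat P).length + 3 := by
        have h4 := congrArg List.length hW2
        rw [List.length_rotate, ← hN] at h4
        simp at h4; omega
      have hWeq : W = [B, A] ++ (flat P ++ [X]) := by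
        have h5 : W = (W.rotate 2).rotate (N - 2) := by
          rw [List.rotate_rotate, (by omega : 2 + (N - 2) = N), hN, List.rotate_length]
        rw [h5, hW2, List.rotate_eq_drop_append_take (by simp; omega),
          (by omega : N - 2 = (flat P).length + 1), List.drop_length_add_append, List.take_length_add_append]
        rfl
      have hval' : IsOrigCyclicParsing W 0 ((6 :: (P ++ [0])).map wordOf) := by
        rw [isOrig_iff]
        refine ⟨?_, 0, ?_, by simp⟩
        · rw [List.rotate_zero, hWeq, flat_cons, flat_append]
          simp
        · rw [show (6 : Fin 9) :: (P ++ [0]) = (6 :: P) ++ [0] by simp]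
          exact List.getLast?_concat
      have hr₀N : r₀ = N - 1 := by
        rcases mod_helper (r₀ + N - 2) N (by omega) with ⟨e1, e2⟩ | ⟨e1, e2⟩ <;> omega
      have hi' : (r₀ + N - 0) % N = N - 1 := by
        rcases mod_helper (r₀ + N - 0) N (by omega) with ⟨e1, e2⟩ | ⟨e1, e2⟩ <;> omega
      have hsplit' : splitIdx (6 :: (P ++ [0])) (N - 1) = (6 :: P, [0]) := by
        have h6 := splitIdx_eq (6 :: P) 0 [] (N - 1) (by rw [flat_cons]; simp; omega)
          (by rw [flat_cons]; simp; omega)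
        simpa using h6
      have hback : Tmap W r₀ (0, 6 :: (P ++ [0])) = (2, P ++ [3]) := by
        rw [Tmap, if_pos hval', ← hN, hi', hsplit', Tstep4]
      refine ⟨by rw [hTx]; exact hval', by rw [hTx]; omega, ?_, ?_, ?_⟩
      · rw [hTx, hback, hlQ]
      · rw [hTx, hlQ]; simp
      · rw [hTx, hlQ]
        exact parseVal_flip2 P
    · -- split XBA in place
      rw [Tstep1 _ _ _ _ hc] at hTx
      have hval' : IsOrigCyclicParsing W r ((P ++ 0 :: 6 :: Q').map wordOf) := by
        rw [isOrig_iff]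
        constructor
        · rw [← hflat, hlQ, flat_append, flat_append, flat_cons, flat_cons, flat_cons]
          simp
        · cases Q' with
          | nil =>
            have ha₀ : a₀ = 3 := by
              rw [hlQ] at hlast
              rw [List.getLast?_concat] at hlast
              exact (Option.some_inj.1 hlast).symm
            have hr2 : r ≠ 2 := fun h => hc ⟨rfl, h⟩
            have hr3 : r < 3 := by rw [ha₀] at halen; simpa using halen
            refine ⟨6, ?_, by simp; omega⟩
            rw [show P ++ [(0 : Fin 9), 6] = (P ++ [0]) ++ [6] by simp]
            exact List.getLast?_concat
          | cons q Q₂ =>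
            refine ⟨a₀, ?_, halen⟩
            rw [hlQ, List.getLast?_append_of_ne_nil _ (by simp)] at hlast
            rw [show P ++ (0 : Fin 9) :: 6 :: q :: Q₂ = (P ++ [0, 6]) ++ q :: Q₂ by simp,
              List.getLast?_append_of_ne_nil _ (by simp)]
            simpa using hlast
      have hsplit' : splitIdx (P ++ 0 :: 6 :: Q') i = (P, 0 :: 6 :: Q') :=
        splitIdx_eq P 0 (6 :: Q') i (by omega) (by simp [w0]; omega)
      have hback : Tmap W r₀ (r, P ++ 0 :: 6 :: Q') = (r, l) := by
        rw [Tmap, if_pos hval', ← hN, ← hi, hsplit', Tstep3, hlQ]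
      refine ⟨by rw [hTx]; exact hval', by rw [hTx]; omega, by rw [hTx, hback], ?_, ?_⟩
      · rw [hTx, hlQ]; simp
      · rw [hTx, hlQ]
        exact parseVal_flip1 P Q'
  · -- the marked X is the word X followed by the word BA: merge in place
    rw [Tstep3] at hTx
    have hlast' : ∀ h : Q'' = [], r < 2 := by
      intro h
      subst h
      have ha₀ : a₀ = 6 := by
        rw [hlQ, show P ++ [(0 : Fin 9), 6] = (P ++ [0]) ++ [6] by simp,
          List.getLast?_concat] at hlast
        exact (Option.some_inj.1 hlast).symm
      rw [ha₀] at halen; simpa using halen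
    have hval' : IsOrigCyclicParsing W r ((P ++ 3 :: Q'').map wordOf) := by
      rw [isOrig_iff]
      constructor
      · rw [← hflat, hlQ, flat_append, flat_append, flat_cons, flat_cons, flat_cons]
        simp
      · cases Q'' with
        | nil =>
          refine ⟨3, List.getLast?_concat, ?_⟩
          have h9 := hlast' rfl
          rw [w3]
          simp
          omega
        | cons q Q₂ =>
          refine ⟨a₀, ?_, halen⟩
          rw [hlQ, show P ++ (0 : Fin 9) :: 6 :: q :: Q₂ = (P ++ [0, 6]) ++ q :: Q₂ by simp,
            List.getLast?_append_of_ne_nil _ (by simp)] at hlast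
          rw [show P ++ (3 : Fin 9) :: q :: Q₂ = (P ++ [3]) ++ q :: Q₂ by simp,
            List.getLast?_append_of_ne_nil _ (by simp)]
          simpa using hlast
    have hsplit' : splitIdx (P ++ 3 :: Q'') i = (P, 3 :: Q'') :=
      splitIdx_eq P 3 Q'' i (by omega) (by simp [w3]; omega)
    have hnc : ¬ (Q'' = [] ∧ r = 2) := by
      rintro ⟨h1, h2⟩
      have := hlast' h1
      omega
    have hback : Tmap W r₀ (r, P ++ 3 :: Q'') = (r, l) := by
      rw [Tmap, if_pos hval', ← hN, ← hi, hsplit', Tstep1 _ _ _ _ hnc, hlQ]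
    refine ⟨by rw [hTx]; exact hval', by rw [hTx]; omega, by rw [hTx, hback], ?_, ?_⟩
    · rw [hTx, hlQ]; simp
    · rw [hTx, hlQ, parseVal_flip1, neg_neg]
  · -- the marked X is the last word X, followed (wrapping) by the first word BA
    subst hQ0
    rw [Tstep4] at hTx
    have hr0 : r = 0 := by
      have ha₀ : a₀ = 0 := by
        rw [hlQ, show (6 : Fin 9) :: P' ++ [0] = (6 :: P') ++ [0] by simp,
          List.getLast?_concat] at hlast
        exact (Option.some_inj.1 hlast).symm
      rw [ha₀] at halen
      simp [w0] at halen
      omega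
    subst hr0
    have hNP : N = (flat P').length + 3 := by
      rw [hlQ] at hlen
      simp at hlen
      omega
    have hWeq : W = [B, A] ++ (flat P' ++ [X]) := by
      rw [← List.rotate_zero W, ← hflat, hlQ]
      simp
    have hr₀N : r₀ = N - 1 := by
      rcases mod_helper (r₀ + N - 0) N (by omega) with ⟨e1, e2⟩ | ⟨e1, e2⟩ <;>
        · simp at hiP
          omega
    have hval' : IsOrigCyclicParsing W 2 ((P' ++ [3]).map wordOf) := by
      rw [isOrig_iff]
      refine ⟨?_, 3, List.getLast?_concat, by simp [w3]⟩
      rw [hWeq, List.rotate_eq_drop_append_take (by simp)]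
      rw [show (2 : ℕ) = ([B, A] : PWord).length + 0 by simp, List.drop_length_add_append,
        List.take_length_add_append]
      simp [flat_append, w3]
    have hi' : (r₀ + N - 2) % N = N - 3 := by
      rcases mod_helper (r₀ + N - 2) N (by omega) with ⟨e1, e2⟩ | ⟨e1, e2⟩ <;> omega
    have hsplit' : splitIdx (P' ++ [3]) (N - 3) = (P', [3]) :=
      splitIdx_eq P' 3 [] (N - 3) (by omega) (by simp [w3]; omega)
    have hback : Tmap W r₀ (2, P' ++ [3]) = (0, l) := by
      rw [Tmap, if_pos hval', ← hN, hi', hsplit', Tstep2, hlQ]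
      simp
    refine ⟨by rw [hTx]; exact hval', by rw [hTx]; omega, by rw [hTx, hback], ?_, ?_⟩
    · rw [hTx, hlQ]; simp
    · rw [hTx, hlQ, show (6 : Fin 9) :: P' ++ [0] = 6 :: (P' ++ [0]) by simp,
        parseVal_flip2, neg_neg]

end TightAux
namespace TightAux

noncomputable def Fval (W : PWord) (x : ℕ × List (Fin 9)) : Polynomial ℤ :=
  if IsOrigCyclicParsing W x.1 (x.2.map wordOf) then parseVal origCoeff (x.2.map wordOf)
  else 0

def Sset (N : ℕ) : Finset (ℕ × List (Fin 9)) :=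
  ((Finset.range N) ×ˢ ((Finset.range (N + 1)).sigma
    (fun k => (Finset.univ : Finset (Fin k → Fin 9))))).image
    (fun p => (p.1, List.ofFn p.2.2))

lemma mem_Sset (N : ℕ) (x : ℕ × List (Fin 9)) :
    x ∈ Sset N ↔ x.1 < N ∧ x.2.length ≤ N := by
  constructor
  · intro hx
    rw [Sset, Finset.mem_image] at hx
    obtain ⟨p, hp, rfl⟩ := hx
    obtain ⟨h1, h2⟩ := Finset.mem_product.1 hp
    have h3 := (Finset.mem_sigma.1 h2).1
    rw [Finset.mem_range] at h1 h3
    exact ⟨h1, by simp; omega⟩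
  · rintro ⟨h1, h2⟩
    rw [Sset, Finset.mem_image]
    refine ⟨(x.1, ⟨x.2.length, x.2.get⟩), ?_, ?_⟩
    · rw [Finset.mem_product]
      refine ⟨by simpa using h1, ?_⟩
      rw [Finset.mem_sigma]
      exact ⟨by simp; omega, Finset.mem_univ _⟩
    · simp [List.ofFn_get]

lemma sum_eq (W : PWord) : origCycVal W = ∑ x ∈ Sset W.length, Fval W x := by
  rw [Sset, Finset.sum_image, Finset.sum_product, origCycVal]
  · rw [Finset.sum_congr rfl]
    intro r _
    rw [Finset.sum_sigma]
    rfl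
  · intro p _ q _ hpq
    rw [Prod.mk.injEq] at hpq
    obtain ⟨h1, h2⟩ := hpq
    rw [List.ofFn_inj'] at h2
    exact Prod.ext h1 h2

lemma Tmap_invalid (W : PWord) (r₀ : ℕ) (x : ℕ × List (Fin 9))
    (hv : ¬ IsOrigCyclicParsing W x.1 (x.2.map wordOf)) : Tmap W r₀ x = x := by
  rw [Tmap, if_neg hv]

end TightAux

/-- If the cyclic sentence `(W)` contains the substring `XB` (read cyclically), then
its value in the original puzzle vanishes: `|(W)| = 0`. -/
theorem cyclic_XB_vanishes (W : PWord)
    (h : ∃ r : ℕ, [PLetter.X, PLetter.B] <+: W.rotate r) :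
    origCycVal W = 0 := by
  classical
  obtain ⟨r₁, hpre₁⟩ := h
  have hW : W.length ≠ 0 := by
    intro h0
    have h2 := hpre₁.length_le
    rw [List.length_rotate, h0] at h2
    simp at h2
  have hNpos : 0 < W.length := Nat.pos_of_ne_zero hW
  set N := W.length with hN
  set r₀ := r₁ % N with hr₀def
  have hr₀ : r₀ < N := Nat.mod_lt _ hNpos
  have hpre : [PLetter.X, PLetter.B] <+: W.rotate r₀ := by
    rw [hr₀def, hN, List.rotate_mod]
    exact hpre₁
  rw [TightAux.sum_eq]
  apply Finset.sum_involution (g := fun x _ => TightAux.Tmap W r₀ x)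
  · -- f a + f (g a) = 0
    intro x hx
    obtain ⟨r, l⟩ := x
    rw [TightAux.mem_Sset] at hx
    by_cases hv : IsOrigCyclicParsing W r (l.map wordOf)
    · obtain ⟨m1, m2, m3, m4, m5⟩ :=
        TightAux.master W r₀ hr₀ hpre r l hx.1 hv
      simp only [TightAux.Fval]
      rw [if_pos hv, if_pos m1, m5]
      exact add_neg_cancel _
    · rw [TightAux.Tmap_invalid W r₀ _ hv]
      simp only [TightAux.Fval]
      rw [if_neg hv]
      simp
  · -- f a ≠ 0 → g a ≠ a
    intro x hx hf
    obtain ⟨r, l⟩ := x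
    rw [TightAux.mem_Sset] at hx
    by_cases hv : IsOrigCyclicParsing W r (l.map wordOf)
    · obtain ⟨m1, m2, m3, m4, m5⟩ :=
        TightAux.master W r₀ hr₀ hpre r l hx.1 hv
      intro heq
      exact m4 (by rw [heq])
    · exact absurd (by simp only [TightAux.Fval]; rw [if_neg hv]) hf
  · -- g a ∈ s
    intro x hx
    obtain ⟨r, l⟩ := x
    rw [TightAux.mem_Sset] at hx ⊢
    by_cases hv : IsOrigCyclicParsing W r (l.map wordOf)
    · obtain ⟨m1, m2, m3, m4, m5⟩ :=
        TightAux.master W r₀ hr₀ hpre r l hx.1 hv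
      exact ⟨m2, TightAux.valid_len_le W _ _ m1⟩
    · rw [TightAux.Tmap_invalid W r₀ _ hv]
      exact hx
  · -- involution
    intro x hx
    obtain ⟨r, l⟩ := x
    rw [TightAux.mem_Sset] at hx
    by_cases hv : IsOrigCyclicParsing W r (l.map wordOf)
    · obtain ⟨m1, m2, m3, m4, m5⟩ :=
        TightAux.master W r₀ hr₀ hpre r l hx.1 hv
      exact m3
    · rw [TightAux.Tmap_invalid W r₀ (r, l) hv, TightAux.Tmap_invalid W r₀ (r, l) hv]
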